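/- If (x_1, …, x_k) and (y_1, …, y_l) are both legal terminating firing sequences for an initial configuration (ρ₀, ν₀), then k = l and the two resulting configurations are identical. -/

import Mathlib

/-- The set `E₂ = {±e_1, ±e_2}` of cardinal directions in `ℤ²`. -/
def E2 : Set (ℤ × ℤ) := {(1, 0), (-1, 0), (0, 1), (0, -1)}

/-- A particle configuration: rotor directions and (finitely many) particles at each site. -/
abbrev PConfig := ((ℤ × ℤ) → Fin 4) × ((ℤ × ℤ) → ℕ)

/-- Firing the site `x`: one particle moves from `x` to `x + ε(ρ(x))`, and the rotor at `x`
is incremented by one modulo 4. -/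
def fire (ε : Fin 4 → ℤ × ℤ) (c : PConfig) (x : ℤ × ℤ) : PConfig :=
  (Function.update c.1 x (c.1 x + 1),
    fun z => (if z = x then c.2 z - 1 else c.2 z) + (if z = x + ε (c.1 x) then 1 else 0))

/-- Apply a sequence of firings in order. -/
def fireSeq (ε : Fin 4 → ℤ × ℤ) : List (ℤ × ℤ) → PConfig → PConfig
  | [], c => c
  | x :: xs, c => fireSeq ε xs (fire ε c x)

/-- A firing sequence is legal if each fired site holds at least two particles at the moment
it is fired. -/
def LegalSeq (ε : Fin 4 → ℤ × ℤ) : List (ℤ × ℤ) → PConfig → Prop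
  | [], _ => True
  | x :: xs, c => 2 ≤ c.2 x ∧ LegalSeq ε xs (fire ε c x)

/-- A firing sequence is terminating if the resulting configuration has at most one particle
at every site. -/
def Terminating (ε : Fin 4 → ℤ × ℤ) (l : List (ℤ × ℤ)) (c : PConfig) : Prop :=
  ∀ z : ℤ × ℤ, (fireSeq ε l c).2 z ≤ 1


lemma fire_fst (ε : Fin 4 → ℤ × ℤ) (c : PConfig) (x y : ℤ × ℤ) (h : y ≠ x) :
    (fire ε c x).1 y = c.1 y := by
  simp [fire, Function.update_of_ne h]

lemma fire_snd_mono (ε : Fin 4 → ℤ × ℤ) (c : PConfig) {x y : ℤ × ℤ} (h : y ≠ x) :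
    c.2 y ≤ (fire ε c x).2 y := by
  simp only [fire, if_neg h]
  exact Nat.le_add_right _ _

lemma fire_comm (ε : Fin 4 → ℤ × ℤ) (c : PConfig) {x y : ℤ × ℤ} (hxy : x ≠ y)
    (hx : 1 ≤ c.2 x) (hy : 1 ≤ c.2 y) :
    fire ε (fire ε c x) y = fire ε (fire ε c y) x := by
  have h1 : (fire ε c x).1 y = c.1 y := fire_fst ε c x y (Ne.symm hxy)
  have h2 : (fire ε c y).1 x = c.1 x := fire_fst ε c y x hxy
  refine Prod.ext ?_ ?_
  · show Function.update (fire ε c x).1 y ((fire ε c x).1 y + 1)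
       = Function.update (fire ε c y).1 x ((fire ε c y).1 x + 1)
    rw [h1, h2]
    show Function.update (Function.update c.1 x (c.1 x + 1)) y (c.1 y + 1)
       = Function.update (Function.update c.1 y (c.1 y + 1)) x (c.1 x + 1)
    exact Function.update_comm hxy _ _ _
  · funext z
    show (if z = y then (fire ε c x).2 z - 1 else (fire ε c x).2 z)
          + (if z = y + ε ((fire ε c x).1 y) then 1 else 0)
       = (if z = x then (fire ε c y).2 z - 1 else (fire ε c y).2 z)
          + (if z = x + ε ((fire ε c y).1 x) then 1 else 0)
    rw [h1, h2]
    simp only [fire]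
    have hx' := hx; have hy' := hy
    by_cases e1 : z = x <;> by_cases e2 : z = y <;>
      by_cases e3 : z = x + ε (c.1 x) <;> by_cases e4 : z = y + ε (c.1 y) <;>
      simp_all

lemma not_mem_fireSeq (ε : Fin 4 → ℤ × ℤ) :
    ∀ (l : List (ℤ × ℤ)) (c : PConfig) {y : ℤ × ℤ}, y ∉ l →
      c.2 y ≤ (fireSeq ε l c).2 y
  | [], c, y, _ => le_refl _
  | x :: xs, c, y, h => by
    have hyx : y ≠ x := fun e => h (e ▸ (List.mem_cons_self : x ∈ x :: xs))
    have hxs : y ∉ xs := fun e => h (List.mem_cons_of_mem _ e)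
    exact le_trans (fire_snd_mono ε c hyx) (not_mem_fireSeq ε xs (fire ε c x) hxs)

lemma mem_split' {y : ℤ × ℤ} : ∀ {l : List (ℤ × ℤ)}, y ∈ l →
    ∃ a b, l = a ++ y :: b ∧ y ∉ a := by
  intro l
  induction l with
  | nil => intro h; exact absurd h (List.not_mem_nil)
  | cons x xs ih =>
    intro h
    by_cases hxy : y = x
    · exact ⟨[], xs, by simp [hxy], List.not_mem_nil⟩
    · obtain ⟨a, b, rfl, ha⟩ := ih ((List.mem_cons.1 h).resolve_left hxy)
      exact ⟨x :: a, b, rfl, by simp [hxy, ha]⟩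

lemma move_front (ε : Fin 4 → ℤ × ℤ) {y : ℤ × ℤ} :
    ∀ (a : List (ℤ × ℤ)) (b : List (ℤ × ℤ)) (c : PConfig), y ∉ a → 2 ≤ c.2 y →
      LegalSeq ε (a ++ y :: b) c →
      LegalSeq ε (y :: (a ++ b)) c ∧ fireSeq ε (a ++ y :: b) c = fireSeq ε (y :: (a ++ b)) c
  | [], b, c, _, hy, hl => ⟨hl, rfl⟩
  | x :: a', b, c, ha, hy, hl => by
    have hyx : y ≠ x := fun e => ha (e ▸ (List.mem_cons_self : x ∈ x :: a'))
    have ha' : y ∉ a' := fun e => ha (List.mem_cons_of_mem _ e)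
    obtain ⟨hx, hl'⟩ := hl
    have hy' : 2 ≤ (fire ε c x).2 y := le_trans hy (fire_snd_mono ε c hyx)
    obtain ⟨hleg, heq⟩ := move_front ε a' b (fire ε c x) ha' hy' hl'
    obtain ⟨hy2, hrest⟩ := hleg
    have hcomm := fire_comm ε c (Ne.symm hyx) (by omega : 1 ≤ c.2 x) (by omega : 1 ≤ c.2 y)
    have hx2 : 2 ≤ (fire ε c y).2 x := le_trans hx (fire_snd_mono ε c (Ne.symm hyx))
    refine ⟨⟨hy, hx2, ?_⟩, ?_⟩
    · rw [← hcomm]; exact hrest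
    · show fireSeq ε (a' ++ y :: b) (fire ε c x) = fireSeq ε (a' ++ b) (fire ε (fire ε c y) x)
      rw [heq, ← hcomm]; rfl

lemma abelian_aux (ε : Fin 4 → ℤ × ℤ) :
    ∀ (l₂ l₁ : List (ℤ × ℤ)) (c₀ : PConfig),
      LegalSeq ε l₁ c₀ → LegalSeq ε l₂ c₀ →
      Terminating ε l₁ c₀ → Terminating ε l₂ c₀ →
      l₁.length = l₂.length ∧ fireSeq ε l₁ c₀ = fireSeq ε l₂ c₀ := by
  intro l₂
  induction l₂ with
  | nil =>
    intro l₁ c₀ h₁ _ _ t₂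
    match l₁, h₁ with
    | [], _ => exact ⟨rfl, rfl⟩
    | x :: xs, ⟨hx, _⟩ =>
      exact absurd (le_trans hx (t₂ x)) (by norm_num)
  | cons y l₂' ih =>
    intro l₁ c₀ h₁ h₂ t₁ t₂
    obtain ⟨hy, h₂'⟩ := h₂
    have hmem : y ∈ l₁ := by
      by_contra hne
      have := le_trans hy (not_mem_fireSeq ε l₁ c₀ hne)
      exact absurd (le_trans this (t₁ y)) (by norm_num)
    obtain ⟨a, b, rfl, ha⟩ := mem_split' hmem
    obtain ⟨⟨_, hleg⟩, heq⟩ := move_front ε a b c₀ ha hy h₁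
    have t₁' : Terminating ε (a ++ b) (fire ε c₀ y) := by
      intro z
      have : fireSeq ε (a ++ b) (fire ε c₀ y) = fireSeq ε (a ++ y :: b) c₀ := heq.symm
      rw [this]; exact t₁ z
    obtain ⟨hlen, hfin⟩ := ih (a ++ b) (fire ε c₀ y) hleg h₂' t₁' t₂
    constructor
    · simp only [List.length_append, List.length_cons] at hlen ⊢
      omega
    · show fireSeq ε (a ++ y :: b) c₀ = fireSeq ε l₂' (fire ε c₀ y)
      rw [heq]; exact hfin

/-- The abelian property: any two legal terminating firing sequences for the same initial
configuration have the same length and produce the same final configuration. -/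
theorem rotor_firing_abelian (ε : Fin 4 → ℤ × ℤ)
    (hε₁ : Function.Injective ε) (hε₂ : ∀ k, ε k ∈ E2)
    (hε₃ : ∀ v ∈ E2, ∃ k, ε k = v)
    (c₀ : PConfig) (hfin : (Function.support c₀.2).Finite)
    (l₁ l₂ : List (ℤ × ℤ))
    (h₁ : LegalSeq ε l₁ c₀) (h₂ : LegalSeq ε l₂ c₀)
    (t₁ : Terminating ε l₁ c₀) (t₂ : Terminating ε l₂ c₀) :
    l₁.length = l₂.length ∧ fireSeq ε l₁ c₀ = fireSeq ε l₂ c₀ := by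
  exact abelian_aux ε l₂ l₁ c₀ h₁ h₂ t₁ t₂
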